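/- arXiv:2312.01333 — 7 statements merged into one kernel-verified Lean document; each statement's English description precedes it below -/
import Mathlib

section
/- For every natural number n ≠ 0, the number of injective finite sequences of elements of an n-element set is strictly greater than the number of partitions of that set; that is, the cardinality of the set of duplicate-free lists over Fin n is strictly greater than the cardinality of the set of partitions of Fin n. -/
open List Finset

namespace SeqInjGtPartAux

variable {n : ℕ}

theorem length_dropWhile_le (p : Fin n → Bool) :
    ∀ l : List (Fin n), (l.dropWhile p).length ≤ l.length
  | [] => le_refl _
  | a :: l => by
    rw [List.dropWhile_cons]
    by_cases h : p a = true
    · simp only [h, if_true]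
      exact (length_dropWhile_le p l).trans (Nat.le_succ _)
    · simp [h]

/-- Split a list into blocks at strict left-to-right minima. -/
def decode : List (Fin n) → List (List (Fin n))
  | [] => []
  | h :: t =>
    (h :: t.takeWhile (fun x => h < x)) :: decode (t.dropWhile (fun x => h < x))
  termination_by l => l.length
  decreasing_by
    simpa using Nat.lt_succ_of_le (length_dropWhile_le _ t)

theorem takeWhile_append_of_all (p : Fin n → Bool) :
    ∀ (l₁ l₂ : List (Fin n)), (∀ x ∈ l₁, p x = true) →
      (l₁ ++ l₂).takeWhile p = l₁ ++ l₂.takeWhile p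
  | [], l₂, _ => rfl
  | a :: l₁, l₂, h => by
    have ha : p a = true := h a (List.mem_cons_self)
    simp only [List.cons_append, List.takeWhile_cons, ha, if_true]
    rw [takeWhile_append_of_all p l₁ l₂ fun x hx => h x (List.mem_cons_of_mem _ hx)]

theorem dropWhile_append_of_all (p : Fin n → Bool) :
    ∀ (l₁ l₂ : List (Fin n)), (∀ x ∈ l₁, p x = true) →
      (l₁ ++ l₂).dropWhile p = l₂.dropWhile p
  | [], l₂, _ => rfl
  | a :: l₁, l₂, h => by
    have ha : p a = true := h a (List.mem_cons_self)
    simp only [List.cons_append, List.dropWhile_cons, ha, if_true]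
    exact dropWhile_append_of_all p l₁ l₂ fun x hx => h x (List.mem_cons_of_mem _ hx)

theorem decode_flatten :
    ∀ L : List (Fin n × List (Fin n)),
      (∀ p ∈ L, ∀ x ∈ p.2, p.1 < x) →
      L.Chain' (fun p q => q.1 < p.1) →
      decode ((L.map fun p => p.1 :: p.2).flatten) = L.map fun p => p.1 :: p.2
  | [], _, _ => by simp [decode]
  | p :: L, hmem, hchain => by
    have hall : ∀ x ∈ p.2, (fun x => decide (p.1 < x)) x = true := by
      intro x hx
      simpa using hmem p List.mem_cons_self x hx
    have hrest : ((L.map fun q => q.1 :: q.2).flatten).takeWhile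
          (fun x => decide (p.1 < x)) = [] ∧
        ((L.map fun q => q.1 :: q.2).flatten).dropWhile
          (fun x => decide (p.1 < x)) = (L.map fun q => q.1 :: q.2).flatten := by
      cases L with
      | nil => simp
      | cons q L' =>
        have hq : q.1 < p.1 := (List.isChain_cons_cons.mp hchain).1
        have hnot : ¬ p.1 < q.1 := not_lt.mpr hq.le
        constructor
        · simp [List.takeWhile_cons, hnot]
        · simp [List.dropWhile_cons, hnot]
    have htw : ((p.2 ++ (L.map fun q => q.1 :: q.2).flatten).takeWhile
        (fun x => decide (p.1 < x))) = p.2 := by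
      rw [takeWhile_append_of_all _ _ _ hall, hrest.1, List.append_nil]
    have hdw : ((p.2 ++ (L.map fun q => q.1 :: q.2).flatten).dropWhile
        (fun x => decide (p.1 < x))) = (L.map fun q => q.1 :: q.2).flatten := by
      rw [dropWhile_append_of_all _ _ _ hall, hrest.2]
    have ih := decode_flatten L
      (fun q hq x hx => hmem q (List.mem_cons_of_mem _ hq) x hx)
      (List.isChain_cons.mp hchain).2
    simp only [List.map_cons, List.flatten_cons, List.cons_append, decode,
      htw, hdw, ih]

noncomputable section

/-- The equivalence class of `x` as a finset. -/
noncomputable def cls (s : Setoid (Fin n)) (x : Fin n) : Finset (Fin n) :=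
  @Finset.filter _ (fun y => s x y) (Classical.decPred _) Finset.univ

theorem mem_cls {s : Setoid (Fin n)} {x y : Fin n} : y ∈ cls s x ↔ s x y := by
  classical
  simp [cls]

theorem cls_nonempty (s : Setoid (Fin n)) (x : Fin n) : (cls s x).Nonempty :=
  ⟨x, mem_cls.mpr (s.refl' x)⟩

/-- The minimum of the class of `x`. -/
noncomputable def mn (s : Setoid (Fin n)) (x : Fin n) : Fin n :=
  (cls s x).min' (cls_nonempty s x)

theorem r_mn (s : Setoid (Fin n)) (x : Fin n) : s x (mn s x) :=
  mem_cls.mp ((cls s x).min'_mem _)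

theorem cls_eq {s : Setoid (Fin n)} {x y : Fin n} (h : s x y) :
    cls s x = cls s y := by
  ext z
  simp only [mem_cls]
  exact ⟨fun hz => s.trans' (s.symm' h) hz, fun hz => s.trans' h hz⟩

theorem mn_eq {s : Setoid (Fin n)} {x y : Fin n} (h : s x y) :
    mn s x = mn s y := by
  simp only [mn]
  congr 1
  exact cls_eq h

theorem mn_le {s : Setoid (Fin n)} {x y : Fin n} (h : y ∈ cls s x) :
    mn s x ≤ y :=
  Finset.min'_le _ _ h

theorem mn_mn (s : Setoid (Fin n)) (x : Fin n) : mn s (mn s x) = mn s x :=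
  (mn_eq (r_mn s x)).symm

/-- The set of class minima. -/
noncomputable def mins (s : Setoid (Fin n)) : Finset (Fin n) :=
  @Finset.filter _ (fun m => mn s m = m) (Classical.decPred _) Finset.univ

theorem mem_mins {s : Setoid (Fin n)} {m : Fin n} : m ∈ mins s ↔ mn s m = m := by
  classical
  simp [mins]

/-- The class minima, sorted in decreasing order. -/
noncomputable def minsList (s : Setoid (Fin n)) : List (Fin n) :=
  (mins s).sort (· ≥ ·)

/-- Non-minimal elements of the class of `m`, sorted increasingly. -/
noncomputable def rest (s : Setoid (Fin n)) (m : Fin n) : List (Fin n) :=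
  ((cls s m).erase m).sort (· ≤ ·)

theorem mem_rest {s : Setoid (Fin n)} {m x : Fin n} :
    x ∈ rest s m ↔ x ≠ m ∧ x ∈ cls s m := by
  simp [rest, Finset.mem_sort, Finset.mem_erase]

noncomputable def blocks (s : Setoid (Fin n)) : List (Fin n × List (Fin n)) :=
  (minsList s).map fun m => (m, rest s m)

noncomputable def blockL (s : Setoid (Fin n)) : List (List (Fin n)) :=
  (blocks s).map fun p => p.1 :: p.2

noncomputable def encode (s : Setoid (Fin n)) : List (Fin n) :=
  (blockL s).flatten

theorem blocks_hmem (s : Setoid (Fin n)) :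
    ∀ p ∈ blocks s, ∀ x ∈ p.2, p.1 < x := by
  intro p hp x hx
  simp only [blocks, List.mem_map] at hp
  obtain ⟨m, hm, rfl⟩ := hp
  have hmM : mn s m = m := mem_mins.mp ((Finset.mem_sort _).mp hm)
  obtain ⟨hne, hcl⟩ := mem_rest.mp hx
  have := mn_le hcl
  rw [hmM] at this
  exact lt_of_le_of_ne this (Ne.symm hne)

theorem blocks_chain (s : Setoid (Fin n)) :
    (blocks s).Chain' (fun p q => q.1 < p.1) := by
  apply List.Pairwise.isChain
  rw [blocks, List.pairwise_map]
  have h := (Finset.sortedGT_sort (mins s)).pairwise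
  exact h

theorem mem_block_iff {s : Setoid (Fin n)} {m x : Fin n} :
    x ∈ m :: rest s m ↔ x ∈ cls s m := by
  simp only [List.mem_cons, mem_rest]
  constructor
  · rintro (rfl | ⟨_, h⟩)
    · exact mem_cls.mpr (s.refl' _)
    · exact h
  · intro h
    by_cases hx : x = m
    · exact Or.inl hx
    · exact Or.inr ⟨hx, h⟩

theorem rel_iff_block {s : Setoid (Fin n)} {x y : Fin n} :
    s x y ↔ ∃ l ∈ blockL s, x ∈ l ∧ y ∈ l := by
  constructor
  · intro h
    refine ⟨mn s x :: rest s (mn s x), ?_, ?_, ?_⟩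
    · simp only [blockL, blocks, List.map_map, List.mem_map]
      refine ⟨mn s x, ?_, rfl⟩
      exact (Finset.mem_sort _).mpr (mem_mins.mpr (mn_mn s x))
    · exact mem_block_iff.mpr (mem_cls.mpr (s.symm' (r_mn s x)))
    · refine mem_block_iff.mpr (mem_cls.mpr ?_)
      exact s.trans' (s.symm' (r_mn s x)) (s.trans' h (s.trans' (s.refl' y) (s.refl' y)))
  · rintro ⟨l, hl, hx, hy⟩
    simp only [blockL, blocks, List.map_map, List.mem_map] at hl
    obtain ⟨m, _, rfl⟩ := hl
    have hx' := mem_cls.mp (mem_block_iff.mp hx)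
    have hy' := mem_cls.mp (mem_block_iff.mp hy)
    exact s.trans' (s.symm' hx') hy'

theorem encode_nodup (s : Setoid (Fin n)) : (encode s).Nodup := by
  rw [encode, List.nodup_flatten]
  constructor
  · intro l hl
    simp only [blockL, blocks, List.map_map, List.mem_map] at hl
    obtain ⟨m, _, rfl⟩ := hl
    show (m :: rest s m).Nodup
    rw [List.nodup_cons]
    refine ⟨fun hm => (mem_rest.mp hm).1 rfl, ?_⟩
    rw [rest]
    exact Finset.sort_nodup _ _
  · rw [blockL, blocks, List.map_map, List.pairwise_map]
    have hnd : (minsList s).Pairwise (· ≠ ·) := (Finset.sort_nodup _ _)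
    refine List.Pairwise.imp_of_mem ?_ hnd
    intro a b ha hb hne
    intro z hza hzb
    have haM : mn s a = a := mem_mins.mp ((Finset.mem_sort _).mp ha)
    have hbM : mn s b = b := mem_mins.mp ((Finset.mem_sort _).mp hb)
    have hza' := mem_cls.mp (mem_block_iff.mp hza)
    have hzb' := mem_cls.mp (mem_block_iff.mp hzb)
    have : a = b := by
      calc a = mn s a := haM.symm
        _ = mn s z := mn_eq hza'
        _ = mn s b := (mn_eq hzb').symm
        _ = b := hbM
    exact hne this

theorem mem_encode_of_min {s : Setoid (Fin n)} (x : Fin n) :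
    mn s x ∈ encode s := by
  rw [encode, List.mem_flatten]
  refine ⟨mn s x :: rest s (mn s x), ?_, List.mem_cons_self⟩
  simp only [blockL, blocks, List.map_map, List.mem_map]
  exact ⟨mn s x, (Finset.mem_sort _).mpr (mem_mins.mpr (mn_mn s x)), rfl⟩

theorem encode_ne_nil {s : Setoid (Fin n)} (x : Fin n) : encode s ≠ [] := by
  intro h
  have := mem_encode_of_min (s := s) x
  rw [h] at this
  exact List.not_mem_nil this

theorem encode_injective : Function.Injective (encode (n := n)) := by
  intro s t h
  have hs := decode_flatten (blocks s) (blocks_hmem s) (blocks_chain s)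
  have ht := decode_flatten (blocks t) (blocks_hmem t) (blocks_chain t)
  have hb : blockL s = blockL t := by
    have : decode (encode s) = decode (encode t) := by rw [h]
    rw [encode, encode, blockL, blockL] at *
    rw [hs, ht] at this
    exact this
  apply Setoid.ext
  intro x y
  rw [show (s x y ↔ t x y) ↔ _ from Iff.rfl]
  rw [rel_iff_block, rel_iff_block, hb]

end

end SeqInjGtPartAux

open SeqInjGtPartAux in
theorem seq_inj_gt_part_fin_n (n : ℕ) (hn : n ≠ 0) :
    Nat.card {l : List (Fin n) // l.Nodup} >
      Nat.card {P : Set (Set (Fin n)) // Setoid.IsPartition P} := by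
  classical
  have x0 : Fin n := ⟨0, Nat.pos_of_ne_zero hn⟩
  have e1 : Nat.card {P : Set (Set (Fin n)) // Setoid.IsPartition P}
      = Nat.card (Setoid (Fin n)) :=
    (Nat.card_congr (Setoid.Partition.orderIso (Fin n)).toEquiv).symm
  haveI : Finite (Setoid (Fin n)) := by
    refine Finite.of_injective (fun s : Setoid (Fin n) => (s : Fin n → Fin n → Prop)) ?_
    intro a b h
    exact Setoid.ext fun x y => iff_of_eq (congrFun (congrFun h x) y)
  let F : Setoid (Fin n) ⊕ Unit → {l : List (Fin n) // l.Nodup} := fun z =>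
    match z with
    | .inl s => ⟨encode s, encode_nodup s⟩
    | .inr _ => ⟨[], List.nodup_nil⟩
  have hF : Function.Injective F := by
    rintro (a | a) (b | b) h
    · have : encode a = encode b := congrArg Subtype.val h
      exact congrArg Sum.inl (encode_injective this)
    · exact absurd (congrArg Subtype.val h) (encode_ne_nil x0)
    · exact absurd (congrArg Subtype.val h).symm (encode_ne_nil x0)
    · rfl
  have hle : Nat.card (Setoid (Fin n) ⊕ Unit) ≤ Nat.card {l : List (Fin n) // l.Nodup} :=
    Nat.card_le_card_of_injective F hF
  rw [Nat.card_sum] at hle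
  have : Nat.card Unit = 1 := Nat.card_unique
  rw [this] at hle
  rw [e1]
  omega
end

section
/- For every nonempty finite set A, the number of injective finite sequences of elements of A is strictly greater than the number of partitions of A. -/
open Finset Nat

theorem seq_inj_gt_part (A : Type*) [Finite A] [Nonempty A] :
    Nat.card {l : List A // l.Nodup} >
      Nat.card {P : Set (Set A) // Setoid.IsPartition P} := by
  classical
  cases nonempty_fintype A
  set n := Fintype.card A with hn
  let e : A ≃ Fin n := Fintype.equivFin A
  have hpart : Nat.card {P : Set (Set A) // Setoid.IsPartition P} = Nat.card (Setoid A) :=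
    (Nat.card_congr (Setoid.Partition.orderIso A).toEquiv).symm
  set C : Setoid A → A → Finset (Fin n) :=
    fun s a => (univ.filter (fun x => s.r x a)).image e with hC
  have hmemC : ∀ (s : Setoid A) (a : A), e a ∈ C s a := fun s a =>
    Finset.mem_image.2 ⟨a, Finset.mem_filter.2 ⟨Finset.mem_univ a, Setoid.refl a⟩, rfl⟩
  have hne : ∀ s a, (C s a).Nonempty := fun s a => ⟨e a, hmemC s a⟩
  set M : Setoid A → A → Fin n := fun s a => (C s a).min' (hne s a) with hM
  have hCeq : ∀ (s : Setoid A) (a b : A), s.r a b → C s a = C s b := by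
    intro s a b hab
    ext m
    simp only [hC, Finset.mem_image, Finset.mem_filter, Finset.mem_univ, true_and]
    exact ⟨fun ⟨x, hx, hxm⟩ => ⟨x, s.trans hx hab, hxm⟩,
      fun ⟨x, hx, hxm⟩ => ⟨x, s.trans hx (s.symm hab), hxm⟩⟩
  have hMcongr : ∀ (s : Setoid A) (a b : A), s.r a b → M s a = M s b := by
    intro s a b hab
    have hc : C s a = C s b := hCeq s a b hab
    simp only [hM, hc]
  have hMr : ∀ (s : Setoid A) (a b : A), M s a = M s b → s.r a b := by
    intro s a b h
    have ha : M s a ∈ C s a := Finset.min'_mem _ _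
    have hb : M s b ∈ C s b := Finset.min'_mem _ _
    rw [h] at ha
    simp only [hC, Finset.mem_image, Finset.mem_filter, Finset.mem_univ, true_and] at ha hb
    obtain ⟨x, hx, hxm⟩ := ha
    obtain ⟨y, hy, hym⟩ := hb
    have hxy : x = y := e.injective (hxm.trans hym.symm)
    exact s.trans (s.symm hx) (hxy ▸ hy)
  have hMle : ∀ s a, (M s a : ℕ) ≤ (e a : ℕ) := fun s a =>
    Finset.min'_le _ _ (hmemC s a)
  have hinj : Function.Injective
      (fun (s : Setoid A) (a : A) => (⟨(M s a : ℕ), Nat.lt_succ_of_le (hMle s a)⟩ :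
        Fin ((e a : ℕ) + 1))) := by
    intro s t h
    have hMeq : ∀ a, M s a = M t a := by
      intro a
      have h1 := congrFun h a
      simp only [Fin.mk.injEq] at h1
      exact Fin.ext h1
    ext a b
    constructor
    · intro hab
      exact hMr t a b ((hMeq a).symm.trans ((hMcongr s a b hab).trans (hMeq b)))
    · intro hab
      exact hMr s a b ((hMeq a).trans ((hMcongr t a b hab).trans (hMeq b).symm))
  have hcard1 : Nat.card (Setoid A) ≤ Nat.card (∀ a : A, Fin ((e a : ℕ) + 1)) :=
    Nat.card_le_card_of_injective _ hinj
  have hcard2 : Nat.card (∀ a : A, Fin ((e a : ℕ) + 1)) = n ! := by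
    rw [Nat.card_pi]
    simp only [Nat.card_eq_fintype_card, Fintype.card_fin]
    rw [Equiv.prod_comp e (fun i : Fin n => (i : ℕ) + 1)]
    rw [Fin.prod_univ_eq_prod_range (fun i => i + 1) n]
    exact Finset.prod_range_add_one_eq_factorial n
  let L : List A := Finset.univ.toList
  have hLnd : L.Nodup := Finset.nodup_toList _
  have hLmem : ∀ a : A, a ∈ L := fun a => Finset.mem_toList.2 (Finset.mem_univ a)
  have hLne : L ≠ [] := by
    obtain ⟨a⟩ := ‹Nonempty A›
    exact List.ne_nil_of_mem (hLmem a)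
  let G : Option (Equiv.Perm A) → {l : List A // l.Nodup} := fun o =>
    match o with
    | none => ⟨[], List.nodup_nil⟩
    | some σ => ⟨L.map σ, hLnd.map σ.injective⟩
  have hGinj : Function.Injective G := by
    intro o₁ o₂ h
    match o₁, o₂ with
    | none, none => rfl
    | none, some σ =>
      exact absurd (congrArg Subtype.val h).symm (by simpa [G] using hLne)
    | some σ, none =>
      exact absurd (congrArg Subtype.val h) (by simpa [G] using hLne)
    | some σ, some τ =>
      have h' : L.map σ = L.map τ := congrArg Subtype.val h
      have := List.map_eq_map_iff.1 h'
      exact congrArg some (Equiv.ext fun a => this a (hLmem a))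
  have hcard3 : Nat.card (Option (Equiv.Perm A)) ≤ Nat.card {l : List A // l.Nodup} :=
    Nat.card_le_card_of_injective G hGinj
  have hcard4 : Nat.card (Option (Equiv.Perm A)) = n ! + 1 := by
    simp [Nat.card_eq_fintype_card, Fintype.card_option, Fintype.card_perm, hn]
  omega
end

section
/- For every Dedekind-infinite set A (i.e., ℵ₀ ≤ |A|), the cardinality of the set of finite sequences of elements of A is strictly less than the cardinality of the set of partitions of A all of whose members are finite: |seq(A)| < |Part_fin(A)|. -/
open Cardinal Set

theorem seq_lt_partFin_of_dedekind_infinite (A : Type*)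
    (hA : Cardinal.aleph0 ≤ Cardinal.mk A) :
    Cardinal.mk (List A) <
      Cardinal.mk {P : Set (Set A) // Setoid.IsPartition P ∧ ∀ s ∈ P, s.Finite} := by
  classical
  have hinf : Infinite A := Cardinal.infinite_iff.mpr hA
  have hcard : (Cardinal.mk (A ⊕ A)) = Cardinal.mk A := by
    simpa using Cardinal.add_eq_self hA
  obtain ⟨e⟩ := Cardinal.eq.mp hcard
  set idx : A ⊕ A → A := Sum.elim id id with hidx
  set blk : Set A → (A ⊕ A) → Set (A ⊕ A) := fun S p =>
    if idx p ∈ S then {Sum.inl (idx p), Sum.inr (idx p)} else {p} with hblk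
  have mem_blk : ∀ S p, p ∈ blk S p := by
    intro S p
    by_cases h : idx p ∈ S
    · simp only [hblk, if_pos h]
      cases p with
      | inl a => left; rfl
      | inr a => right; rfl
    · simp [hblk, if_neg h]
  have blk_eq : ∀ S p q, p ∈ blk S q → blk S p = blk S q := by
    intro S p q hpq
    by_cases hq : idx q ∈ S
    · simp only [hblk, if_pos hq, Set.mem_insert_iff, Set.mem_singleton_iff] at hpq
      have hpqe : idx p = idx q := by rcases hpq with h | h <;> subst h <;> rfl
      simp [hblk, hpqe, hq]
    · simp only [hblk, if_neg hq, Set.mem_singleton_iff] at hpq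
      subst hpq; rfl
  set C : Set A → (A ⊕ A) → Set A := fun S p => e '' blk S p with hC
  set P : Set A → Set (Set A) := fun S => Set.range (C S) with hP
  have hfin : ∀ S p, (blk S p).Finite := by
    intro S p
    by_cases h : idx p ∈ S
    · simp only [hblk, if_pos h]
      exact (Set.finite_singleton _).insert _
    · simp only [hblk, if_neg h]
      exact Set.finite_singleton _
  have hblk_ne : ∀ S p, (blk S p).Nonempty := fun S p => ⟨p, mem_blk S p⟩
  have hpart : ∀ S, Setoid.IsPartition (P S) := by
    intro S
    constructor
    · rintro ⟨p, hp⟩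
      exact ((hblk_ne S p).image e).ne_empty hp
    · intro a
      refine ⟨C S (e.symm a), ⟨⟨e.symm a, rfl⟩, ⟨e.symm a, mem_blk S _, by simp⟩⟩, ?_⟩
      rintro b ⟨⟨q, rfl⟩, ha⟩
      obtain ⟨r, hr, hra⟩ := ha
      have : r = e.symm a := by
        apply e.injective; simp [hra]
      subst this
      simp only [hC]
      rw [blk_eq S (e.symm a) q hr]
  have hinj : Function.Injective (fun S => P S) := by
    have key : ∀ S T : Set A, P S = P T → S ⊆ T := by
      intro S T hST a haS
      have h1 : C S (Sum.inl a) ∈ P T := hST ▸ ⟨Sum.inl a, rfl⟩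
      obtain ⟨q, hq⟩ := h1
      have hbe : blk T q = blk S (Sum.inl a) := by
        have := congrArg (fun s => e.symm '' s) hq
        simpa [hC, Set.image_image] using this
      have hblkS : blk S (Sum.inl a) =
          ({Sum.inl a, Sum.inr a} : Set (A ⊕ A)) := by
        simp [hblk, haS, hidx]
      by_cases hqT : idx q ∈ T
      · have : blk T q = ({Sum.inl (idx q), Sum.inr (idx q)} : Set (A ⊕ A)) := by
          simp [hblk, hqT]
        rw [this, hblkS] at hbe
        have h2 : (Sum.inl (idx q) : A ⊕ A) ∈ ({Sum.inl a, Sum.inr a} : Set (A ⊕ A)) := by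
          rw [← hbe]; exact Or.inl rfl
        rcases h2 with h2 | h2
        · have : idx q = a := by injection h2
          rwa [← this]
        · exact absurd h2 (by simp)
      · have : blk T q = ({q} : Set (A ⊕ A)) := by simp [hblk, hqT]
        rw [this, hblkS] at hbe
        have h3 : (Sum.inl a : A ⊕ A) = q := by
          have : (Sum.inl a : A ⊕ A) ∈ ({q} : Set (A ⊕ A)) := hbe ▸ Or.inl rfl
          simpa using this
        have h4 : (Sum.inr a : A ⊕ A) = q := by
          have : (Sum.inr a : A ⊕ A) ∈ ({q} : Set (A ⊕ A)) := hbe ▸ Or.inr rfl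
          simpa using this
        exact absurd (h3.trans h4.symm) (by simp)
    intro S T h
    exact le_antisymm (key S T h) (key T S h.symm)
  have hle : Cardinal.mk (Set A) ≤
      Cardinal.mk {P : Set (Set A) // Setoid.IsPartition P ∧ ∀ s ∈ P, s.Finite} := by
    refine Cardinal.mk_le_of_injective (f := fun S => ⟨P S, hpart S, ?_⟩) ?_
    · rintro s ⟨p, rfl⟩
      exact (hfin S p).image e
    · intro S T h
      exact hinj (congrArg Subtype.val h)
  calc Cardinal.mk (List A) = Cardinal.mk A := Cardinal.mk_list_eq_mk A
    _ < 2 ^ Cardinal.mk A := Cardinal.cantor _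
    _ = Cardinal.mk (Set A) := (Cardinal.mk_set).symm
    _ ≤ _ := hle
end

section
/- For every infinite set A and every natural number n, the cardinality of the set of finite sequences of elements of A of length at most n is strictly less than the cardinality of the set of partitions of A all of whose members are finite: |seq_{≤n}(A)| < |Part_fin(A)|. -/
open Cardinal

theorem seq_le_n_lt_partFin (A : Type*) [Infinite A] (n : ℕ) :
    Cardinal.mk {l : List A // l.length ≤ n} <
      Cardinal.mk {P : Set (Set A) // Setoid.IsPartition P ∧ ∀ s ∈ P, s.Finite} := by
  obtain ⟨e⟩ : Nonempty (A ≃ A ⊕ A) := by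
    rw [← Cardinal.eq, Cardinal.mk_sum, Cardinal.lift_id, Cardinal.add_mk_eq_max, max_self]
  set t : A ⊕ A → A := Sum.elim id id with ht
  -- setoid for each S
  have hr : ∀ S : Set A, Equivalence (fun x y : A => x = y ∨ (t (e x) = t (e y) ∧ t (e x) ∈ S)) := by
    intro S
    constructor
    · intro x; left; rfl
    · rintro x y (rfl | ⟨h1, h2⟩); · left; rfl
      · right; exact ⟨h1.symm, h1 ▸ h2⟩
    · rintro x y z (rfl | ⟨h1, h2⟩) h
      · exact h
      · rcases h with rfl | ⟨h3, h4⟩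
        · right; exact ⟨h1, h2⟩
        · right; exact ⟨h1.trans h3, h2⟩
  set r : Set A → Setoid A := fun S => ⟨_, hr S⟩ with hrdef
  have key : ∀ (S : Set A) (a : A), a ∈ S ↔ (r S).r (e.symm (.inl a)) (e.symm (.inr a)) := by
    intro S a
    constructor
    · intro h; right; simp [ht, h]
    · rintro (h | ⟨h1, h2⟩)
      · exact absurd (e.symm.injective h) (by simp)
      · simpa [ht] using h2
  have hinj : Function.Injective
      (fun S : Set A => (⟨(r S).classes, (r S).isPartition_classes, by
        rintro s ⟨y, rfl⟩
        apply Set.Finite.subset (((Set.finite_singleton (e.symm (.inr (t (e y))))).insert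
          (e.symm (.inl (t (e y))))).insert y)
        rintro x (rfl | ⟨h1, h2⟩)
        · exact Set.mem_insert _ _
        · simp only [Set.mem_insert_iff, Set.mem_singleton_iff]
          rcases hxy : e x with a | a
          · right; left
            rw [← h1, hxy]; simp only [ht, Sum.elim_inl, id_eq]
            rw [← hxy]; simp
          · right; right
            rw [← h1, hxy]; simp only [ht, Sum.elim_inr, id_eq]
            rw [← hxy]; simp⟩ :
        {P : Set (Set A) // Setoid.IsPartition P ∧ ∀ s ∈ P, s.Finite})) := by
    intro S1 S2 h
    have : (r S1).classes = (r S2).classes := congrArg Subtype.val h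
    have hre : r S1 = r S2 := Setoid.classes_inj.2 this
    ext a
    rw [key S1 a, key S2 a, hre]
  calc Cardinal.mk {l : List A // l.length ≤ n}
      ≤ Cardinal.mk (List A) := Cardinal.mk_subtype_le _
    _ = Cardinal.mk A := Cardinal.mk_list_eq_mk A
    _ < 2 ^ Cardinal.mk A := Cardinal.cantor _
    _ = Cardinal.mk (Set A) := (Cardinal.mk_set).symm
    _ ≤ _ := Cardinal.mk_le_of_injective hinj
end

section
/- For every set A, there is an injection from the set of finite sequences of elements of A into the set of partitions of the disjoint union A ⊕ ℕ all of whose members are finite; that is, |seq(A)| ≤ |Part_fin(A ⊕ ℕ)|. -/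
open Set

private def blk (A : Type) (l : List A) (a : A) : Set (A ⊕ ℕ) :=
  insert (Sum.inl a) (Sum.inr '' {i : ℕ | l[i]? = some a})

private lemma inl_mem_blk {A : Type} {l : List A} {a b : A} :
    Sum.inl b ∈ blk A l a ↔ b = a := by
  simp [blk]

private lemma inr_mem_blk {A : Type} {l : List A} {a : A} {i : ℕ} :
    Sum.inr i ∈ blk A l a ↔ l[i]? = some a := by
  simp [blk]

private def part (A : Type) (l : List A) : Set (Set (A ⊕ ℕ)) :=
  {s | (∃ a, s = blk A l a) ∨ ∃ m, l.length ≤ m ∧ s = {Sum.inr m}}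

private lemma part_isPartition (A : Type) (l : List A) : Setoid.IsPartition (part A l) := by
  constructor
  · rintro (⟨a, ha⟩ | ⟨m, _, hm⟩)
    · have : Sum.inl a ∈ (∅ : Set (A ⊕ ℕ)) := ha ▸ (inl_mem_blk.mpr rfl)
      exact this
    · have : Sum.inr m ∈ (∅ : Set (A ⊕ ℕ)) := hm ▸ rfl
      exact this
  · rintro (a | i)
    · refine ⟨blk A l a, ⟨Or.inl ⟨a, rfl⟩, inl_mem_blk.mpr rfl⟩, ?_⟩
      rintro b ⟨(⟨a', rfl⟩ | ⟨m, _, rfl⟩), hmem⟩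
      · rw [inl_mem_blk.mp hmem]
      · exact absurd hmem (by simp)
    · rcases h : l[i]? with _ | a
      · refine ⟨{Sum.inr i}, ⟨Or.inr ⟨i, by simpa [List.getElem?_eq_none_iff] using h, rfl⟩, rfl⟩, ?_⟩
        rintro b ⟨(⟨a', rfl⟩ | ⟨m, _, rfl⟩), hmem⟩
        · rw [inr_mem_blk] at hmem; rw [hmem] at h; exact absurd h (by simp)
        · obtain rfl : i = m := by simpa using hmem
          rfl
      · refine ⟨blk A l a, ⟨Or.inl ⟨a, rfl⟩, inr_mem_blk.mpr h⟩, ?_⟩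
        rintro b ⟨(⟨a', rfl⟩ | ⟨m, hm, rfl⟩), hmem⟩
        · rw [inr_mem_blk] at hmem; rw [hmem] at h
          rw [Option.some_inj.mp h]
        · obtain rfl : i = m := by simpa using hmem
          have : i < l.length := List.getElem?_eq_some_iff.mp h |>.1
          omega

private lemma part_finite (A : Type) (l : List A) : ∀ s ∈ part A l, s.Finite := by
  rintro s (⟨a, rfl⟩ | ⟨m, _, rfl⟩)
  · have hsub : {i : ℕ | l[i]? = some a} ⊆ Iio l.length := by
      intro i hi
      exact List.getElem?_eq_some_iff.mp hi |>.1
    exact ((finite_Iio _).subset hsub).image _ |>.insert _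
  · exact finite_singleton _

private lemma part_inj_aux {A : Type} {l₁ l₂ : List A}
    (h : part A l₁ = part A l₂) {i : ℕ} {a : A} (hg : l₁[i]? = some a) :
    l₂[i]? = some a := by
  have hb : blk A l₁ a ∈ part A l₂ := h ▸ Or.inl ⟨a, rfl⟩
  rcases hb with ⟨a', heq⟩ | ⟨m, _, heq⟩
  · have hla : Sum.inl a ∈ blk A l₂ a' := heq ▸ inl_mem_blk.mpr rfl
    have : a = a' := inl_mem_blk.mp hla
    subst this
    have : Sum.inr i ∈ blk A l₂ a := heq ▸ inr_mem_blk.mpr hg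
    exact inr_mem_blk.mp this
  · have : Sum.inl a ∈ ({Sum.inr m} : Set (A ⊕ ℕ)) := heq ▸ inl_mem_blk.mpr rfl
    exact absurd this (by simp)

theorem seq_le_partFin_sum_nat (A : Type) :
    Cardinal.mk (List A) ≤
      Cardinal.mk {P : Set (Set (A ⊕ ℕ)) // Setoid.IsPartition P ∧ ∀ s ∈ P, s.Finite} := by
  apply Cardinal.mk_le_of_injective
    (f := fun l => ⟨part A l, part_isPartition A l, part_finite A l⟩)
  intro l₁ l₂ h
  have h' : part A l₁ = part A l₂ := congrArg Subtype.val h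
  apply List.ext_getElem?
  intro i
  rcases h1 : l₁[i]? with _ | a
  · rcases h2 : l₂[i]? with _ | b
    · rfl
    · rw [← h1, part_inj_aux h'.symm h2]
  · rw [part_inj_aux h' h1]
end

section
/- For every infinite set A, the cardinality of the set of finite subsets of A is strictly less than the cardinality of the set of partitions of A: |fin(A)| < |Part(A)|. -/
open Cardinal Set

noncomputable def finEquiv (A : Type*) : {s : Set A // s.Finite} ≃ Finset A where
  toFun s := s.2.toFinset
  invFun t := ⟨t, t.finite_toSet⟩
  left_inv s := by ext x; simp
  right_inv t := by simp

theorem isPart {A : Type*} (a : A) (S : Set A) :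
    Setoid.IsPartition (insert (insert a S) ((fun x => ({x} : Set A)) '' (insert a S)ᶜ)) := by
  constructor
  · rintro (h | ⟨x, hx, h⟩)
    · have := Set.mem_insert a S; rw [← h] at this; exact this
    · exact (Set.singleton_ne_empty x) h
  · intro y
    by_cases hy : y ∈ insert a S
    · refine ⟨insert a S, ⟨Or.inl rfl, hy⟩, ?_⟩
      rintro t ⟨(rfl | ⟨x, hx, rfl⟩), hyt⟩
      · rfl
      · simp only [mem_singleton_iff] at hyt; subst hyt; exact absurd hy hx
    · refine ⟨{y}, ⟨Or.inr ⟨y, hy, rfl⟩, rfl⟩, ?_⟩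
      rintro t ⟨(rfl | ⟨x, hx, rfl⟩), hyt⟩
      · exact absurd hyt hy
      · simp only [mem_singleton_iff] at hyt; subst hyt; rfl

theorem finsets_lt_part (A : Type*) [Infinite A] :
    Cardinal.mk {s : Set A // s.Finite} <
      Cardinal.mk {P : Set (Set A) // Setoid.IsPartition P} := by
  have a : A := Classical.arbitrary A
  have h1 : #{s : Set A // s.Finite} = #A := by
    rw [mk_congr (finEquiv A), mk_finset_of_infinite]
  have h2 : #({a}ᶜ : Set A) = #A := by
    apply mk_compl_of_infinite
    simp [Cardinal.one_lt_iff_nontrivial]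
    infer_instance
  have h3 : #(Set ({a}ᶜ : Set A)) ≤ #{P : Set (Set A) // Setoid.IsPartition P} := by
    refine Cardinal.mk_le_of_injective (f := fun (S : Set ({a}ᶜ : Set A)) =>
      ⟨insert (insert a ((↑) '' S)) ((fun x => ({x} : Set A)) '' (insert a ((↑) '' S))ᶜ),
        isPart a _⟩) ?_
    intro S T h
    simp only [Subtype.mk.injEq] at h
    have hmem : insert a ((↑) '' S) ∈ insert (insert a ((↑) '' T))
        ((fun x => ({x} : Set A)) '' (insert a ((↑) '' T))ᶜ) := by
      rw [← h]; exact Or.inl rfl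
    have heq : insert a ((↑) '' S) = insert a ((↑) '' T) := by
      rcases hmem with h' | ⟨x, hx, h'⟩
      · exact h'
      · exfalso
        have : a ∈ ({x} : Set A) := by
          rw [show ({x} : Set A) = insert a ((↑) '' S) from h']; exact Or.inl rfl
        rw [mem_singleton_iff] at this
        subst this
        exact hx (Or.inl rfl)
    have key : ∀ U : Set ({a}ᶜ : Set A), ((↑) '' U : Set A) = insert a ((↑) '' U) \ {a} := by
      intro U
      ext x
      simp only [mem_diff, mem_insert_iff, mem_singleton_iff]
      constructor
      · rintro ⟨⟨y, hy⟩, hyU, rfl⟩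
        exact ⟨Or.inr ⟨⟨y, hy⟩, hyU, rfl⟩, hy⟩
      · rintro ⟨h' | h', hx⟩
        · exact absurd h' hx
        · exact h'
    have : ((↑) '' S : Set A) = (↑) '' T := by rw [key S, key T, heq]
    exact Set.image_injective.2 Subtype.coe_injective this
  rw [h1]
  calc #A < 2 ^ #A := Cardinal.cantor _
    _ = #(Set ({a}ᶜ : Set A)) := by rw [Cardinal.mk_set, h2]
    _ ≤ _ := h3
end

section
/- For every infinite set A, the cardinality of the set of partitions of A all of whose members are finite equals the cardinality of the power set of A: |Part_fin(A)| = 2^{|A|}. -/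
open Cardinal Set

/-- For a partition, the set of elements sharing a block with `a` equals the block of `a`. -/
lemma partFin_block_eq {A : Type*} {P : Set (Set A)} (hP : Setoid.IsPartition P)
    {s : Set A} (hs : s ∈ P) {a : A} (ha : a ∈ s) :
    {b | ∃ t ∈ P, a ∈ t ∧ b ∈ t} = s := by
  ext b
  constructor
  · rintro ⟨t, htP, hat, hbt⟩
    have : t = s := (hP.2 a).unique ⟨htP, hat⟩ ⟨hs, ha⟩
    rwa [this] at hbt
  · intro hb
    exact ⟨s, hs, ha, hb⟩

lemma partFin_range_eq {A : Type*} {P : Set (Set A)} (hP : Setoid.IsPartition P) :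
    P = Set.range (fun a => {b | ∃ t ∈ P, a ∈ t ∧ b ∈ t}) := by
  ext s
  constructor
  · intro hs
    have hne : s ≠ ∅ := by rintro rfl; exact hP.1 hs
    obtain ⟨a, ha⟩ := Set.nonempty_iff_ne_empty.mpr hne
    exact ⟨a, partFin_block_eq hP hs ha⟩
  · rintro ⟨a, rfl⟩
    obtain ⟨t, ⟨htP, hat⟩, -⟩ := hP.2 a
    show {b | ∃ t ∈ P, a ∈ t ∧ b ∈ t} ∈ P
    rw [partFin_block_eq hP htP hat]
    exact htP

theorem partFin_eq_two_pow (A : Type*) [Infinite A] :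
    Cardinal.mk {P : Set (Set A) // Setoid.IsPartition P ∧ ∀ s ∈ P, s.Finite} =
      2 ^ Cardinal.mk A := by
  classical
  apply le_antisymm
  · -- upper bound: encode a partition by the map sending each point to its block
    have h1 : Cardinal.mk {P : Set (Set A) // Setoid.IsPartition P ∧ ∀ s ∈ P, s.Finite}
        ≤ Cardinal.mk (A → Set A) := by
      apply Cardinal.mk_le_of_injective
        (f := fun P : {P : Set (Set A) // Setoid.IsPartition P ∧ ∀ s ∈ P, s.Finite} =>
          fun a => {b | ∃ t ∈ P.1, a ∈ t ∧ b ∈ t})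
      intro P Q h
      apply Subtype.ext
      calc P.1 = Set.range (fun a => {b | ∃ t ∈ P.1, a ∈ t ∧ b ∈ t}) :=
              partFin_range_eq P.2.1
        _ = Set.range (fun a => {b | ∃ t ∈ Q.1, a ∈ t ∧ b ∈ t}) := congrArg Set.range h
        _ = Q.1 := (partFin_range_eq Q.2.1).symm
    refine h1.trans ?_
    have : Cardinal.mk (A → Set A) = (2 ^ Cardinal.mk A) ^ Cardinal.mk A := by
      rw [← Cardinal.mk_set, Cardinal.power_def]
    rw [this, ← Cardinal.power_mul, Cardinal.mul_eq_self (Cardinal.aleph0_le_mk A)]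
  · -- lower bound
    have h2 : (2 : Cardinal) ≤ Cardinal.mk A := by
      have := Cardinal.aleph0_le_mk A
      have h2' : (2 : Cardinal) ≤ Cardinal.aleph0 := by
        exact_mod_cast (Cardinal.nat_lt_aleph0 2).le
      exact h2'.trans this
    have hAB : Cardinal.mk (A × Bool) = Cardinal.mk A := by
      have hp : Cardinal.mk (A × Bool) = Cardinal.mk A * 2 := by
        simp [Cardinal.mk_prod, Cardinal.mk_bool]
      rw [hp]
      exact Cardinal.mul_eq_left (Cardinal.aleph0_le_mk A) h2 two_ne_zero
    obtain ⟨e⟩ : Nonempty (A ≃ A × Bool) := Cardinal.eq.mp hAB.symm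
    set blk : Set A → A → Set A := fun S x =>
      if (e x).1 ∈ S then {e.symm ((e x).1, false), e.symm ((e x).1, true)} else {x}
      with hblk
    have hxeta : ∀ x : A, e.symm ((e x).1, (e x).2) = x := by
      intro x; simp
    have mem_blk : ∀ (S : Set A) (x : A), x ∈ blk S x := by
      intro S x
      by_cases h : (e x).1 ∈ S
      · simp only [hblk, if_pos h, Set.mem_insert_iff, Set.mem_singleton_iff]
        rcases Bool.dichotomy (e x).2 with h2' | h2'
        · left; rw [← h2']; exact (hxeta x).symm
        · right; rw [← h2']; exact (hxeta x).symm
      · simp [hblk, if_neg h]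
    have blk_eq : ∀ (S : Set A) (x y : A), x ∈ blk S y → blk S y = blk S x := by
      intro S x y hx
      by_cases h : (e y).1 ∈ S
      · rw [hblk] at hx
        simp only [if_pos h, Set.mem_insert_iff, Set.mem_singleton_iff] at hx
        have hx1 : (e x).1 = (e y).1 := by
          rcases hx with hx | hx <;>
          · rw [hx] at * <;> simp_all
        simp only [hblk, if_pos h, hx1, if_pos (hx1 ▸ h)]
      · rw [hblk] at hx
        simp only [if_neg h, Set.mem_singleton_iff] at hx
        rw [hx]
    have part_proof : ∀ S : Set A,
        Setoid.IsPartition (Set.range (blk S)) ∧ ∀ s ∈ Set.range (blk S), s.Finite := by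
      intro S
      refine ⟨⟨?_, ?_⟩, ?_⟩
      · rintro ⟨x, hx⟩
        have := mem_blk S x
        rw [hx] at this
        exact this
      · intro x
        refine ⟨blk S x, ⟨⟨x, rfl⟩, mem_blk S x⟩, ?_⟩
        rintro b ⟨⟨y, rfl⟩, hxb⟩
        exact blk_eq S x y hxb
      · rintro s ⟨y, rfl⟩
        by_cases h : (e y).1 ∈ S
        · simp only [hblk, if_pos h]
          exact (Set.finite_singleton _).insert _
        · simp only [hblk, if_neg h]
          exact Set.finite_singleton _
    have key : ∀ S T : Set A, Set.range (blk S) = Set.range (blk T) → S ⊆ T := by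
      intro S T h a haS
      have hpair : blk S (e.symm (a, false)) =
          ({e.symm (a, false), e.symm (a, true)} : Set A) := by
        simp only [hblk, Equiv.apply_symm_apply]
        rw [if_pos haS]
      have hmem : ({e.symm (a, false), e.symm (a, true)} : Set A) ∈ Set.range (blk T) := by
        rw [← h, ← hpair]
        exact ⟨_, rfl⟩
      obtain ⟨y, hy⟩ := hmem
      by_cases hT : (e y).1 ∈ T
      · rw [hblk] at hy
        simp only [if_pos hT] at hy
        have : e.symm (a, true) ∈ ({e.symm ((e y).1, false), e.symm ((e y).1, true)} : Set A) := by
          rw [hy]; right; rfl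
        simp only [Set.mem_insert_iff, Set.mem_singleton_iff] at this
        rcases this with h' | h'
        · have := e.symm.injective h'
          simp at this
        · have := e.symm.injective h'
          have ha' : a = (e y).1 := congrArg Prod.fst this
          rwa [ha']
      · rw [hblk] at hy
        simp only [if_neg hT] at hy
        exfalso
        have h1 : e.symm (a, false) = y := by
          have : e.symm (a, false) ∈ ({y} : Set A) := by rw [hy]; left; rfl
          simpa using this
        have h2' : e.symm (a, true) = y := by
          have : e.symm (a, true) ∈ ({y} : Set A) := by rw [hy]; right; rfl
          simpa using this
        have := e.symm.injective (h1.trans h2'.symm)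
        simp at this
    have hinj : Function.Injective (fun S : Set A =>
        (⟨Set.range (blk S), part_proof S⟩ :
          {P : Set (Set A) // Setoid.IsPartition P ∧ ∀ s ∈ P, s.Finite})) := by
      intro S T h
      have h' : Set.range (blk S) = Set.range (blk T) := congrArg Subtype.val h
      exact le_antisymm (key S T h') (key T S h'.symm)
    calc (2 : Cardinal) ^ Cardinal.mk A = Cardinal.mk (Set A) := (Cardinal.mk_set).symm
      _ ≤ _ := Cardinal.mk_le_of_injective hinj
end
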